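/- For k > r ≥ 2, the coefficient of the monomial x_1x_2···x_k in the total cluster weight (for the forbidden pattern 12...r with weights (-1)^{#marks}) satisfies coeff(x_1···x_k) = -Σ_{u=2}^{r} coeff(x_u x_{u+1}···x_k), where coeff of a monomial of degree < r is 0 and coeff of a degree-r monomial is -1. -/

import Mathlib

structure Cluster (n r : ℕ) where
  word : List (Fin n)
  marks : List ℕ
  marks_ne : marks ≠ []
  sorted : marks.Chain' (· < ·)
  occ : ∀ s ∈ marks, s + r ≤ word.length ∧ ((word.drop s).take r).Chain' (· < ·)
  overlap : marks.Chain' (fun s t => t < s + r)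
  cover : ∀ i < word.length, ∃ s ∈ marks, s ≤ i ∧ i < s + r

noncomputable def clusterWeight {n r : ℕ} (c : Cluster n r) : MvPolynomial (Fin n) ℤ :=
  MvPolynomial.C ((-1 : ℤ) ^ c.marks.length) *
    (c.word.map fun a => (MvPolynomial.X a : MvPolynomial (Fin n) ℤ)).prod

/-- The exponent vector of the squarefree monomial `x_{u+1} x_{u+2} ⋯ x_k`
(0-indexed: variables with index in `[u, k)`). -/
noncomputable def segMono (n u k : ℕ) : Fin n →₀ ℕ :=
  Finsupp.equivFunOnFinite.symm (fun i : Fin n => if u ≤ (i : ℕ) ∧ (i : ℕ) < k then 1 else 0)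

open List

theorem List.chain'_iff_pairwise {α : Type*} {R : α → α → Prop} [Trans R R R] {l : List α} :
    l.Chain' R ↔ l.Pairwise R := List.isChain_iff_pairwise

theorem List.chain'_cons {α : Type*} {R : α → α → Prop} {x y : α} {l : List α} :
    (x :: y :: l).Chain' R ↔ R x y ∧ (y :: l).Chain' R := List.isChain_cons_cons

theorem List.chain'_cons' {α : Type*} {R : α → α → Prop} {x : α} {l : List α} :
    (x :: l).Chain' R ↔ (∀ y ∈ head? l, R x y) ∧ l.Chain' R := List.isChain_cons

theorem List.chain'_map {α β : Type*} {R : α → α → Prop} (f : β → α) {l : List β} :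
    (map f l).Chain' R ↔ l.Chain' (fun a b : β => R (f a) (f b)) := List.isChain_map f

theorem List.chain'_iff_get {α : Type*} {R : α → α → Prop} {l : List α} :
    l.Chain' R ↔ ∀ (i : ℕ) (h : i < length l - 1),
      R (get l ⟨i, by omega⟩) (get l ⟨i + 1, by omega⟩) := by
  show IsChain R l ↔ _
  rw [List.isChain_iff_getElem]
  constructor
  · intro h i hi
    simpa using h i (by omega)
  · intro h i hi
    simpa using h i (by omega)

theorem List.eq_of_perm_of_sorted {α : Type*} [PartialOrder α] {l₁ l₂ : List α} (p : l₁ ~ l₂)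
    (s₁ : l₁.Pairwise (· < ·)) (s₂ : l₂.Pairwise (· < ·)) : l₁ = l₂ :=
  Perm.eq_of_pairwise (fun a _ _ _ h1 h2 => absurd (lt_trans h1 h2) (lt_irrefl a)) s₁ s₂ p

/-- mark-list predicate for a word of length `m`. -/
def IsMarks (r m : ℕ) (M : List ℕ) : Prop :=
  M ≠ [] ∧ M.Chain' (· < ·) ∧ (∀ s ∈ M, s + r ≤ m) ∧
    M.Chain' (fun s t => t < s + r) ∧ ∀ i < m, ∃ s ∈ M, s ≤ i ∧ i < s + r

lemma sorted_cons_le {a : ℕ} {l : List ℕ} (h : (a :: l).Chain' (· < ·)) :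
    ∀ x ∈ a :: l, a ≤ x := by
  intro x hx
  rcases mem_cons.mp hx with rfl | hx
  · exact le_rfl
  · have := (List.chain'_iff_pairwise.mp h)
    exact le_of_lt ((List.pairwise_cons.mp this).1 x hx)

lemma le_getLast_of_sorted : ∀ (l : List ℕ), l.Chain' (· < ·) →
    ∀ x (hx : x ∈ l), x ≤ l.getLast (ne_nil_of_mem hx) := by
  intro l
  induction l with
  | nil => intro _ x hx; simp at hx
  | cons a t ih =>
    intro h x hx
    cases t with
    | nil => simp at hx; simp [hx]
    | cons b t' =>
      rw [getLast_cons (cons_ne_nil _ _)]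
      rcases mem_cons.mp hx with rfl | hx
      · exact le_trans (sorted_cons_le h b (by simp)) (ih (chain'_cons.mp h).2 b (by simp))
      · exact ih (chain'_cons.mp h).2 x hx

lemma cover_strict {r : ℕ} : ∀ (a : ℕ) (M : List ℕ),
    (a :: M).Chain' (fun s t => t < s + r) →
    ∀ j, a < j → j < (a :: M).getLast (cons_ne_nil a M) + r →
    ∃ s ∈ a :: M, s < j ∧ j < s + r := by
  intro a M
  induction M generalizing a with
  | nil =>
    intro _ j hj1 hj2
    exact ⟨a, by simp, hj1, by simpa using hj2⟩
  | cons b tl ih =>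
    intro hch j hj1 hj2
    rcases le_or_gt j b with h | h
    · exact ⟨a, by simp, hj1, lt_of_le_of_lt h (chain'_cons.mp hch).1⟩
    · obtain ⟨s, hs, h1, h2⟩ := ih b (chain'_cons.mp hch).2 j h
        (by rwa [getLast_cons (cons_ne_nil _ _)] at hj2)
      exact ⟨s, mem_cons_of_mem _ hs, h1, h2⟩

lemma isMarks_zero {r m : ℕ} {M : List ℕ} (hr : 1 ≤ r) (h : IsMarks r m M) :
    ∃ T, M = 0 :: T := by
  obtain ⟨hne, hsort, hbd, hov, hcov⟩ := h
  obtain ⟨a, T, rfl⟩ := exists_cons_of_ne_nil hne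
  have hm : 0 < m := by have := hbd a (by simp); omega
  obtain ⟨s, hs, hs0, _⟩ := hcov 0 hm
  have ha : a ≤ s := sorted_cons_le hsort s hs
  have : a = 0 := by omega
  exact ⟨T, by rw [this]⟩

lemma isMarks_m_le {r m : ℕ} {M : List ℕ} (hr : 1 ≤ r) (h : IsMarks r m M) :
    m ≤ M.getLast h.1 + r := by
  obtain ⟨hne, hsort, hbd, hov, hcov⟩ := h
  rcases Nat.eq_zero_or_pos m with rfl | hm
  · omega
  obtain ⟨s, hs, hs1, hs2⟩ := hcov (m - 1) (by omega)
  have := le_getLast_of_sorted _ hsort s hs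
  omega

lemma finite_incr_lists (m : ℕ) :
    {l : List ℕ | l.Chain' (· < ·) ∧ ∀ x ∈ l, x < m}.Finite := by
  apply Set.Finite.subset ((List.finite_length_le (α := Fin m) m).image (List.map Fin.val))
  intro l ⟨hch, hlt⟩
  have hnd : l.Nodup := (List.chain'_iff_pairwise.mp hch).imp (fun h => ne_of_lt h)
  have hlen : l.length ≤ m := by
    have h1 : l.toFinset ⊆ Finset.range m := by
      intro x hx; simp only [List.mem_toFinset] at hx
      exact Finset.mem_range.mpr (hlt x hx)
    calc l.length = l.toFinset.card := (List.toFinset_card_of_nodup hnd).symm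
    _ ≤ (Finset.range m).card := Finset.card_le_card h1
    _ = m := Finset.card_range m
  refine ⟨l.pmap (fun x h => (⟨x, h⟩ : Fin m)) hlt, ?_, ?_⟩
  · simpa using hlen
  · rw [List.map_pmap]
    simpa using List.pmap_eq_map _ (fun x : ℕ => x) l hlt |>.trans (List.map_id l)

lemma cluster_isMarks {n r : ℕ} (c : Cluster n r) : IsMarks r c.word.length c.marks :=
  ⟨c.marks_ne, c.sorted, fun s hs => (c.occ s hs).1, c.overlap, c.cover⟩

lemma word_chain {n r : ℕ} (hr : 1 ≤ r) (c : Cluster n r) : c.word.Chain' (· < ·) := by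
  rw [List.chain'_iff_get]
  intro i hi
  have hM := cluster_isMarks c
  obtain ⟨T, hT⟩ := isMarks_zero hr hM
  rw [hT] at hM
  have hle := isMarks_m_le hr hM
  obtain ⟨s, hs, hs1, hs2⟩ :=
    cover_strict 0 T (hT ▸ c.overlap) (i + 1) (by omega) (by omega)
  rw [← hT] at hs
  obtain ⟨hsr, hchf⟩ := c.occ s hs
  rw [List.chain'_iff_get] at hchf
  have hlen : ((c.word.drop s).take r).length = r := by
    simp only [List.length_take, List.length_drop]
    omega
  have key := hchf (i - s) (by omega)
  simp only [List.get_eq_getElem, List.getElem_take, List.getElem_drop] at key ⊢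
  have e1 : s + (i - s) = i := by omega
  have e2 : s + (i - s + 1) = i + 1 := by omega
  simp only [e1, e2] at key
  exact key

lemma cluster_word_len {n r : ℕ} (hr : 1 ≤ r) (c : Cluster n r) : c.word.length ≤ n := by
  have hnd : c.word.Nodup :=
    (List.chain'_iff_pairwise.mp (word_chain hr c)).imp (fun h => ne_of_lt h)
  simpa using hnd.length_le_card

instance cluster_finite {n r : ℕ} : Finite (Cluster n r) := by
  rcases Nat.eq_zero_or_pos r with rfl | hr
  · -- r = 0 : word = [], marks = [0]
    have : ∀ c : Cluster n 0, c.word = [] ∧ c.marks = [0] := by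
      intro c
      have hw : c.word = [] := by
        by_contra h
        obtain ⟨s, hs, h1, h2⟩ := c.cover 0 (by simpa [List.length_pos_iff] using h)
        omega
      refine ⟨hw, ?_⟩
      have h0 : ∀ s ∈ c.marks, s = 0 := by
        intro s hs; have := (c.occ s hs).1; simp [hw] at this; omega
      obtain ⟨a, T, hT⟩ := exists_cons_of_ne_nil c.marks_ne
      cases T with
      | nil => rw [hT, h0 a (by rw [hT]; simp)]
      | cons b T' =>
        exfalso
        have hs := c.sorted
        rw [hT, chain'_cons] at hs
        have := h0 a (by rw [hT]; simp)
        have := h0 b (by rw [hT]; simp)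
        omega
    refine Finite.of_injective (fun _ => ()) ?_
    intro c₁ c₂ _
    obtain ⟨h1, h2⟩ := this c₁; obtain ⟨h3, h4⟩ := this c₂
    cases c₁; cases c₂; simp_all
  · have hinj : Function.Injective
        (fun c : Cluster n r => (c.word, c.marks)) := by
      intro c₁ c₂ h
      simp only [Prod.mk.injEq] at h
      cases c₁; cases c₂; simp_all
    have hfin : (Set.range (fun c : Cluster n r => (c.word, c.marks))).Finite := by
      apply Set.Finite.subset
        (((List.finite_length_le (α := Fin n) n).prod (finite_incr_lists n)))
      rintro ⟨w, M⟩ ⟨c, hc⟩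
      simp only [Prod.mk.injEq] at hc
      obtain ⟨hc1, hc2⟩ := hc
      constructor
      · simp only [Set.mem_setOf_eq, ← hc1]; exact cluster_word_len hr c
      · refine ⟨hc2 ▸ c.sorted, ?_⟩
        intro x hx
        have := (c.occ x (hc2 ▸ hx)).1
        have := cluster_word_len hr c
        omega
    have := hfin.to_subtype
    exact Finite.of_injective_finite_range hinj

noncomputable def degVec {n : ℕ} (w : List (Fin n)) : Fin n →₀ ℕ :=
  (w.map fun a => Finsupp.single a 1).sum

lemma degVec_apply {n : ℕ} (w : List (Fin n)) (i : Fin n) : degVec w i = w.count i := by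
  induction w with
  | nil => simp [degVec]
  | cons a w ih =>
    simp only [degVec, List.map_cons, List.sum_cons, Finsupp.add_apply, List.count_cons] at *
    rw [ih, Finsupp.single_apply]
    rcases eq_or_ne a i with rfl | h
    · simp [Nat.add_comm]
    · simp [h, Ne.symm h]

lemma prod_X {n : ℕ} (w : List (Fin n)) :
    (w.map fun a => (MvPolynomial.X a : MvPolynomial (Fin n) ℤ)).prod
      = MvPolynomial.monomial (degVec w) 1 := by
  induction w with
  | nil => simp [degVec]
  | cons a w ih =>
    simp only [List.map_cons, List.prod_cons, ih, degVec, List.sum_cons]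
    rw [MvPolynomial.X, MvPolynomial.monomial_mul, one_mul]

def segWord (n u k : ℕ) (h : k ≤ n) : List (Fin n) :=
  List.ofFn fun j : Fin (k - u) => ⟨u + j.1, by omega⟩

lemma segWord_chain {n u k : ℕ} (h : k ≤ n) : (segWord n u k h).Chain' (· < ·) := by
  rw [List.chain'_iff_get]
  intro i hi
  simp only [segWord, List.length_ofFn] at hi
  simp [segWord, List.get_ofFn, Fin.lt_def]

lemma segWord_count {n u k : ℕ} (h : k ≤ n) (i : Fin n) :
    (segWord n u k h).count i = if u ≤ (i : ℕ) ∧ (i : ℕ) < k then 1 else 0 := by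
  have hnd : (segWord n u k h).Nodup :=
    (List.chain'_iff_pairwise.mp (segWord_chain h)).imp (fun hlt => ne_of_lt hlt)
  have hmem : i ∈ segWord n u k h ↔ u ≤ (i : ℕ) ∧ (i : ℕ) < k := by
    simp only [segWord, List.mem_ofFn]
    constructor
    · rintro ⟨j, rfl⟩; simp; omega
    · rintro ⟨h1, h2⟩
      refine ⟨⟨(i : ℕ) - u, by omega⟩, ?_⟩
      ext; simp; omega
  split_ifs with hcase
  · exact List.count_eq_one_of_mem hnd (hmem.mpr hcase)
  · exact List.count_eq_zero_of_not_mem (fun hm => hcase (hmem.mp hm))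

lemma segMono_apply (n u k : ℕ) (i : Fin n) :
    segMono n u k i = if u ≤ (i : ℕ) ∧ (i : ℕ) < k then 1 else 0 := by
  simp [segMono]

lemma degVec_segWord {n u k : ℕ} (h : k ≤ n) : degVec (segWord n u k h) = segMono n u k := by
  ext i
  rw [degVec_apply, segWord_count, segMono_apply]

lemma word_eq_segWord {n u k : ℕ} (h : k ≤ n) {w : List (Fin n)} (hch : w.Chain' (· < ·))
    (hdeg : degVec w = segMono n u k) : w = segWord n u k h := by
  apply List.eq_of_perm_of_sorted (List.perm_iff_count.mpr ?_)
    (List.chain'_iff_pairwise.mp hch) (List.chain'_iff_pairwise.mp (segWord_chain h))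
  intro i
  rw [← degVec_apply, hdeg, segWord_count, segMono_apply]

lemma chain'_map_of_rel {f : ℕ → ℕ} {R S : ℕ → ℕ → Prop} {l : List ℕ}
    (h : l.Chain' R) (hmem : ∀ x ∈ l, ∀ y ∈ l, R x y → S (f x) (f y)) :
    (l.map f).Chain' S := by
  rw [List.chain'_map, List.chain'_iff_get]
  rw [List.chain'_iff_get] at h
  intro i hi
  exact hmem _ (List.get_mem _ _) _ (List.get_mem _ _) (h i hi)

lemma isMarks_shape {r m : ℕ} {M : List ℕ} (hr : 2 ≤ r) (hm : r < m) (h : IsMarks r m M) :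
    ∃ t T, M = 0 :: t :: T ∧ 1 ≤ t ∧ t < r := by
  obtain ⟨T', hT'⟩ := isMarks_zero (show (1:ℕ) ≤ r by omega) h
  subst hT'
  cases T' with
  | nil =>
    exfalso
    have h2 := isMarks_m_le (show (1:ℕ) ≤ r by omega) h
    rw [List.getLast_singleton] at h2
    omega
  | cons t T =>
    have h1 := h.2.1
    have h2 := h.2.2.2.1
    rw [List.chain'_cons] at h1 h2
    exact ⟨t, T, rfl, by omega, by omega⟩

lemma mem_ge_head {t : ℕ} {T : List ℕ} (hch : (0 :: t :: T).Chain' (· < ·)) :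
    ∀ x ∈ t :: T, t ≤ x :=
  sorted_cons_le (List.chain'_cons.mp hch).2

lemma isMarks_shift {r m t : ℕ} {T : List ℕ} (hr : 2 ≤ r) (hm : r < m)
    (ht1 : 1 ≤ t) (ht2 : t < r) (h : IsMarks r m (0 :: t :: T)) :
    IsMarks r (m - t) ((t :: T).map (· - t)) := by
  obtain ⟨-, hsort, hbd, hov, hcov⟩ := h
  have hge : ∀ x ∈ t :: T, t ≤ x := mem_ge_head hsort
  refine ⟨by simp, ?_, ?_, ?_, ?_⟩
  · exact chain'_map_of_rel (List.chain'_cons.mp hsort).2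
      (fun x hx y hy hxy => by have := hge x hx; omega)
  · rintro s hs
    obtain ⟨x, hx, rfl⟩ := List.mem_map.mp hs
    have := hbd x (List.mem_cons_of_mem _ hx)
    have := hge x hx
    omega
  · exact chain'_map_of_rel (List.chain'_cons.mp hov).2
      (fun x hx y hy hxy => by have := hge x hx; omega)
  · intro i hi
    obtain ⟨s, hs, hs1, hs2⟩ := hcov (i + t) (by omega)
    rcases Nat.lt_or_ge s t with hst | hst
    · refine ⟨0, ?_, by omega, by omega⟩
      exact List.mem_map.mpr ⟨t, by simp, by omega⟩
    · have hsmem : s ∈ t :: T := by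
        rcases List.mem_cons.mp hs with rfl | h' 
        · omega
        · exact h'
      exact ⟨s - t, List.mem_map.mpr ⟨s, hsmem, rfl⟩, by omega, by omega⟩

lemma isMarks_unshift {r m t : ℕ} {M' : List ℕ} (hr : 2 ≤ r) (hm : r < m)
    (ht1 : 1 ≤ t) (ht2 : t < r) (h : IsMarks r (m - t) M') :
    IsMarks r m (0 :: M'.map (· + t)) := by
  obtain ⟨T, rfl⟩ := isMarks_zero (by omega) h
  obtain ⟨-, hsort, hbd, hov, hcov⟩ := h
  refine ⟨by simp, ?_, ?_, ?_, ?_⟩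
  · rw [List.chain'_cons']
    constructor
    · intro y hy
      simp only [List.map_cons, List.head?_cons, Option.mem_def, Option.some.injEq] at hy
      omega
    · exact chain'_map_of_rel hsort (fun x hx y hy hxy => by omega)
  · rintro s hs
    rcases List.mem_cons.mp hs with rfl | hs'
    · omega
    · obtain ⟨x, hx, rfl⟩ := List.mem_map.mp hs'
      have := hbd x hx
      omega
  · rw [List.chain'_cons']
    constructor
    · intro y hy
      simp only [List.map_cons, List.head?_cons, Option.mem_def, Option.some.injEq] at hy
      omega
    · exact chain'_map_of_rel hov (fun x hx y hy hxy => by omega)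
  · intro i hi
    rcases Nat.lt_or_ge i t with hit | hit
    · exact ⟨0, by simp, by omega, by omega⟩
    · obtain ⟨s, hs, hs1, hs2⟩ := hcov (i - t) (by omega)
      exact ⟨s + t, List.mem_cons_of_mem _ (List.mem_map.mpr ⟨s, hs, rfl⟩), by omega, by omega⟩

lemma marks_finite {r m : ℕ} (hr : 1 ≤ r) : {M | IsMarks r m M}.Finite := by
  apply (finite_incr_lists m).subset
  rintro M ⟨hne, hsort, hbd, -, -⟩
  exact ⟨hsort, fun x hx => by have := hbd x hx; omega⟩

noncomputable def gval (r m : ℕ) : ℤ := ∑ᶠ M ∈ {M | IsMarks r m M}, (-1 : ℤ) ^ M.length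

lemma gval_rec {r m : ℕ} (hr : 2 ≤ r) (hm : r < m) :
    gval r m = -∑ t ∈ Finset.Icc 1 (r - 1), gval r (m - t) := by
  classical
  have hr1 : 1 ≤ r := by omega
  have hA := marks_finite (r := r) (m := m) hr1
  have hB : ∀ t : ℕ, {M | IsMarks r (m - t) M}.Finite := fun t => marks_finite hr1
  have hgm : ∀ m' (hf : {M | IsMarks r m' M}.Finite),
      gval r m' = ∑ M ∈ hf.toFinset, (-1 : ℤ) ^ M.length := by
    intro m' hf
    rw [gval, ← finsum_mem_coe_finset, Set.Finite.coe_toFinset]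
  rw [hgm m hA]
  have hstep : ∑ M ∈ hA.toFinset, (-1 : ℤ) ^ M.length =
      ∑ p ∈ (Finset.Icc 1 (r - 1)).sigma (fun t => (hB t).toFinset),
        -(-1 : ℤ) ^ p.2.length := by
    refine Finset.sum_bij'
      (fun M _ => (⟨M.tail.headI, M.tail.map (· - M.tail.headI)⟩ : Σ _ : ℕ, List ℕ))
      (fun p _ => 0 :: p.2.map (· + p.1)) ?_ ?_ ?_ ?_ ?_
    · intro M hM
      rw [Set.Finite.mem_toFinset] at hM
      obtain ⟨t, T, rfl, ht1, ht2⟩ := isMarks_shape hr hm hM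
      refine Finset.mem_sigma.mpr ⟨Finset.mem_Icc.mpr ⟨ht1, Nat.le_pred_of_lt ht2⟩, ?_⟩
      exact (Set.Finite.mem_toFinset _).mpr (isMarks_shift hr hm ht1 ht2 hM)
    · rintro ⟨t, M'⟩ hp
      rw [Finset.mem_sigma, Set.Finite.mem_toFinset] at hp
      obtain ⟨ht, hM'⟩ := hp
      rw [Finset.mem_Icc] at ht
      rw [Set.Finite.mem_toFinset]
      exact isMarks_unshift hr hm ht.1 (by omega) hM'
    · intro M hM
      rw [Set.Finite.mem_toFinset] at hM
      obtain ⟨t, T, rfl, ht1, ht2⟩ := isMarks_shape hr hm hM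
      simp only [List.tail_cons, List.headI, List.map_map]
      congr 1
      rw [show ((· + t) ∘ (· - t)) = fun x => x - t + t from rfl]
      rw [List.map_congr_left (fun x hx => by
        have := mem_ge_head hM.2.1 x hx; omega : ∀ x ∈ t :: T, x - t + t = x)]
      simp
    · rintro ⟨t, M'⟩ hp
      rw [Finset.mem_sigma, Set.Finite.mem_toFinset] at hp
      obtain ⟨ht, hM'⟩ := hp
      obtain ⟨T, rfl⟩ := isMarks_zero hr1 hM'
      simp only [List.map_cons, List.tail_cons, List.headI, Nat.zero_add, List.map_map]
      congr 1
      rw [show ((· - t) ∘ (· + t)) = fun x => x + t - t from rfl]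
      rw [List.map_congr_left (fun x _ => by omega : ∀ x ∈ T, x + t - t = x)]
      simp
    · intro M hM
      rw [Set.Finite.mem_toFinset] at hM
      obtain ⟨t, T, rfl, ht1, ht2⟩ := isMarks_shape hr hm hM
      simp only [List.tail_cons, List.length_cons, List.length_map]
      ring
  rw [hstep, Finset.sum_neg_distrib, Finset.sum_sigma]
  congr 1
  exact Finset.sum_congr rfl (fun t _ => (hgm _ (hB t)).symm)

lemma segWord_length {n u k : ℕ} (h : k ≤ n) : (segWord n u k h).length = k - u := by
  simp [segWord]

lemma coeff_weight {n r : ℕ} (m : Fin n →₀ ℕ) (c : Cluster n r) :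
    MvPolynomial.coeff m (clusterWeight c) =
      if degVec c.word = m then (-1 : ℤ) ^ c.marks.length else 0 := by
  rw [clusterWeight, prod_X, MvPolynomial.coeff_C_mul, MvPolynomial.coeff_monomial]
  split_ifs <;> simp

lemma bijOn_marks {n r u k : ℕ} (hkn : k ≤ n) :
    Set.BijOn (fun c : Cluster n r => c.marks)
      {c | c.word = segWord n u k hkn} {M | IsMarks r (k - u) M} := by
  refine ⟨?_, ?_, ?_⟩
  · intro c hc
    have := cluster_isMarks c
    rw [Set.mem_setOf_eq] at hc
    rw [hc, segWord_length] at this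
    exact this
  · intro c₁ h₁ c₂ h₂ h
    rw [Set.mem_setOf_eq] at h₁ h₂
    cases c₁; cases c₂; simp_all
  · intro M hM
    rw [Set.mem_setOf_eq] at hM
    obtain ⟨hne, hsort, hbd, hov, hcov⟩ := hM
    refine ⟨⟨segWord n u k hkn, M, hne, hsort, ?_, hov, ?_⟩, rfl, rfl⟩
    · intro s hs
      refine ⟨by rw [segWord_length]; exact hbd s hs, ?_⟩
      exact ((segWord_chain hkn).drop s).take r
    · intro i hi
      rw [segWord_length] at hi
      exact hcov i hi

lemma coeff_eq_gval {n r u k : ℕ} (hr : 1 ≤ r) (hu : u < k) (hkn : k ≤ n) :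
    MvPolynomial.coeff (segMono n u k) (∑ᶠ c : Cluster n r, clusterWeight c)
      = gval r (k - u) := by
  classical
  have : Finite (Cluster n r) := cluster_finite
  have hφ := AddMonoidHom.map_finsum
    (AddMonoidHom.mk' (MvPolynomial.coeff (R := ℤ) (segMono n u k))
      (fun p q => MvPolynomial.coeff_add _ p q))
    (f := fun c : Cluster n r => clusterWeight c) (Set.toFinite _)
  simp only [AddMonoidHom.mk'_apply] at hφ
  rw [hφ]
  have hpt : ∀ c : Cluster n r,
      MvPolynomial.coeff (segMono n u k) (clusterWeight c) =
        Set.indicator {c : Cluster n r | c.word = segWord n u k hkn}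
          (fun c => (-1 : ℤ) ^ c.marks.length) c := by
    intro c
    rw [coeff_weight, Set.indicator_apply]
    have : degVec c.word = segMono n u k ↔ c.word = segWord n u k hkn := by
      constructor
      · intro h; exact word_eq_segWord hkn (word_chain hr c) h
      · intro h; rw [h]; exact degVec_segWord hkn
    simp only [Set.mem_setOf_eq]
    split_ifs with h1 h2 h2 <;> first | rfl | (exfalso; tauto)
  rw [finsum_congr hpt, ← finsum_mem_def]
  exact finsum_mem_eq_of_bijOn (s := {c : Cluster n r | c.word = segWord n u k hkn})
    (t := {M | IsMarks r (k - u) M})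
    (f := fun c : Cluster n r => (-1 : ℤ) ^ c.marks.length)
    (g := fun M : List ℕ => (-1 : ℤ) ^ M.length)
    (fun c => c.marks) (bijOn_marks hkn) (fun c _ => rfl)

/-- For `k > r ≥ 2`, the coefficient of `x_1 x_2 ⋯ x_k` in the total cluster
weight satisfies `coeff(x_1⋯x_k) = -∑_{u=2}^{r} coeff(x_u⋯x_k)`. -/
theorem cluster_coeff_recurrence (n r k : ℕ) (hr : 2 ≤ r) (hk : r < k) (hkn : k ≤ n) :
    MvPolynomial.coeff (segMono n 0 k) (∑ᶠ c : Cluster n r, clusterWeight c) =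
      -∑ u ∈ Finset.Icc 1 (r - 1),
          MvPolynomial.coeff (segMono n u k) (∑ᶠ c : Cluster n r, clusterWeight c) := by
  have hr1 : 1 ≤ r := by omega
  rw [coeff_eq_gval hr1 (by omega) hkn, Nat.sub_zero, gval_rec hr hk]
  congr 1
  refine Finset.sum_congr rfl (fun u hu => ?_)
  rw [Finset.mem_Icc] at hu
  exact (coeff_eq_gval hr1 (by omega) hkn).symm
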